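/- arXiv:2103.05194 — 5 statements merged into one kernel-verified Lean document; each statement's English description precedes it below -/
import Mathlib

section
/- Let A, X, B be N×N real symmetric matrices such that A ⪯ X and X ⪯ B in the Loewner order. Then for all indices i ≠ j, the off-diagonal entries satisfy the upper bound X_{ij} ≤ A_{ij} + sqrt((B_{ii} − A_{ii})(B_{jj} − A_{jj})). -/
lemma psd_entry_le_sqrt {N : ℕ} (M : Matrix (Fin N) (Fin N) ℝ)
    (hM : M.PosSemidef) (i j : Fin N) :
    M i j ≤ Real.sqrt (M i i * M j j) := by
  have hsymm : M j i = M i j := by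
    have := hM.1.apply i j
    simpa using this
  have hquad : ∀ t : ℝ, 0 ≤ M i i * (t * t) + (2 * M i j) * t + M j j := by
    intro t
    have h := hM.dotProduct_mulVec_nonneg (t • (Pi.single i 1 : Fin N → ℝ) + Pi.single j 1)
    simp only [Matrix.mulVec_add, Matrix.mulVec_smul, dotProduct_add,
      add_dotProduct, smul_dotProduct, dotProduct_smul,
      Matrix.mulVec_single, single_dotProduct, star_trivial] at h
    simp only [mul_one, smul_eq_mul, Pi.smul_apply] at h
    refine le_of_le_of_eq h (Eq.symm ?_)
    simp [dotProduct_single_one, single_dotProduct, hsymm]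
    ring
  have hd := discrim_le_zero hquad
  rw [discrim] at hd
  have h2 : M i j ^ 2 ≤ M i i * M j j := by nlinarith
  calc M i j ≤ |M i j| := le_abs_self _
  _ = Real.sqrt ((M i j)^2) := (Real.sqrt_sq_eq_abs _).symm
  _ ≤ Real.sqrt (M i i * M j j) := Real.sqrt_le_sqrt h2

/-- If `A ⪯ X ⪯ B` in the Loewner order (for real symmetric
matrices), then the off-diagonal entries satisfy
`X i j ≤ A i j + √((B i i − A i i)(B j j − A j j))`. -/
theorem offdiag_upper_bound_loewner_sandwich (N : ℕ)
    (A X B : Matrix (Fin N) (Fin N) ℝ)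
    (hA : A.IsSymm) (hX : X.IsSymm) (hB : B.IsSymm)
    (hAX : (X - A).PosSemidef) (hXB : (B - X).PosSemidef) :
    ∀ i j : Fin N, i ≠ j →
      X i j ≤ A i j + Real.sqrt ((B i i - A i i) * (B j j - A j j)) := by
  intro i j _
  have h1 := psd_entry_le_sqrt _ hAX i j
  have hii := hXB.dotProduct_mulVec_nonneg (Pi.single i 1)
  have hjj := hXB.dotProduct_mulVec_nonneg (Pi.single j 1)
  simp [Matrix.mulVec_single, single_dotProduct] at hii hjj
  have hii' : X i i ≤ B i i := by simpa [Matrix.sub_apply] using hii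
  have hjj' : X j j ≤ B j j := by simpa [Matrix.sub_apply] using hjj
  have hAii := hAX.dotProduct_mulVec_nonneg (Pi.single i 1)
  have hAjj := hAX.dotProduct_mulVec_nonneg (Pi.single j 1)
  simp [Matrix.mulVec_single, single_dotProduct] at hAii hAjj
  have hAi : A i i ≤ X i i := by simpa [Matrix.sub_apply] using hAii
  have hAj : A j j ≤ X j j := by simpa [Matrix.sub_apply] using hAjj
  have key : Real.sqrt ((X - A) i i * (X - A) j j)
      ≤ Real.sqrt ((B i i - A i i) * (B j j - A j j)) := by
    apply Real.sqrt_le_sqrt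
    apply mul_le_mul
    · simp [Matrix.sub_apply]; linarith
    · simp [Matrix.sub_apply]; linarith
    · simp [Matrix.sub_apply]; linarith
    · linarith
  have := h1.trans key
  simp only [Matrix.sub_apply] at this
  linarith
end

section
/- Let A, X, B be N×N real symmetric matrices such that A ⪯ X and X ⪯ B in the Loewner order. Then for all indices i ≠ j, the off-diagonal entries satisfy the lower bound X_{ij} ≥ B_{ij} − sqrt((B_{ii} − A_{ii})(B_{jj} − A_{jj})). -/
/-- For a real PSD matrix, `(M i j)^2 ≤ M i i * M j j`. -/
lemma psd_entry_sq_le (N : ℕ) (M : Matrix (Fin N) (Fin N) ℝ)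
    (hM : M.PosSemidef) (i j : Fin N) (hij : i ≠ j) :
    M i j * M i j ≤ M i i * M j j := by
  have hsym : M j i = M i j := by
    have := hM.1
    rw [Matrix.IsHermitian] at this
    conv_lhs => rw [← this]
    simp [Matrix.conjTranspose_apply]
  have key : ∀ t : ℝ, 0 ≤ M i i * (t * t) + (2 * M i j) * t + M j j := by
    intro t
    have h : (0 : ℝ) ≤ _ := hM.dotProduct_mulVec_nonneg ((t • (Pi.single i 1 : Fin N → ℝ) + (Pi.single j 1 : Fin N → ℝ)))
    simp only [star_trivial, Matrix.mulVec_add, Matrix.mulVec_smul,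
      dotProduct_add, add_dotProduct, smul_dotProduct,
      dotProduct_smul, Matrix.mulVec_single, single_dotProduct,
      smul_eq_mul, mul_one, op_smul_eq_mul, Matrix.col_apply, one_mul] at h
    convert h using 1
    ring_nf
    rw [hsym]
    ring
  have hd := discrim_le_zero key
  rw [discrim] at hd
  nlinarith
/-- If `A ⪯ X ⪯ B` in the Loewner order (for real symmetric
matrices), then the off-diagonal entries satisfy
`X i j ≥ B i j − √((B i i − A i i)(B j j − A j j))`. -/
theorem offdiag_lower_bound_loewner_sandwich (N : ℕ)
    (A X B : Matrix (Fin N) (Fin N) ℝ)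
    (hA : A.IsSymm) (hX : X.IsSymm) (hB : B.IsSymm)
    (hAX : (X - A).PosSemidef) (hXB : (B - X).PosSemidef) :
    ∀ i j : Fin N, i ≠ j →
      B i j - Real.sqrt ((B i i - A i i) * (B j j - A j j)) ≤ X i j := by
  intro i j hij
  set M := B - X with hMdef
  have hsq := psd_entry_sq_le N M hXB i j hij
  have hdiagM : ∀ k, 0 ≤ M k k := fun k => by
    have := hXB.dotProduct_mulVec_nonneg (Pi.single k 1)
    simpa [Matrix.mulVec_single, single_dotProduct] using this
  have hdiagXA : ∀ k, 0 ≤ X k k - A k k := fun k => by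
    have := hAX.dotProduct_mulVec_nonneg (Pi.single k 1)
    simpa [Matrix.mulVec_single, single_dotProduct, Matrix.sub_apply] using this
  have hMk : ∀ k, M k k ≤ B k k - A k k := fun k => by
    have := hdiagXA k
    simp only [hMdef, Matrix.sub_apply]
    linarith
  have h1 : M i j ≤ Real.sqrt (M i i * M j j) :=
    calc M i j ≤ |M i j| := le_abs_self _
      _ = Real.sqrt (M i j * M i j) := (Real.sqrt_mul_self_eq_abs _).symm
      _ ≤ _ := Real.sqrt_le_sqrt hsq
  have h2 : Real.sqrt (M i i * M j j)
      ≤ Real.sqrt ((B i i - A i i) * (B j j - A j j)) :=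
    Real.sqrt_le_sqrt (mul_le_mul (hMk i) (hMk j) (hdiagM j)
      (le_trans (hdiagM i) (hMk i)))
  have h3 : M i j ≤ Real.sqrt ((B i i - A i i) * (B j j - A j j)) := h1.trans h2
  have hM : M i j = B i j - X i j := by simp [hMdef, Matrix.sub_apply]
  linarith
end

section
/- Let L be an N×N real symmetric positive definite matrix, W an N×N real symmetric matrix, and a, c ∈ ℝ^N. Define g(s, t) = trace(W·(L + s·a·aᵀ + t·c·cᵀ)^{-1}) for (s, t) in a neighborhood of (0, 0) where the inverse exists. Then the mixed second partial derivative of g at (0, 0) equals 2·(cᵀ·L^{-1}·W·L^{-1}·a)·(cᵀ·L^{-1}·a). -/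
open Matrix

attribute [local instance] Matrix.linftyOpNormedRing Matrix.linftyOpNormedAlgebra

private noncomputable def traceMulCLM {N : ℕ} (W : Matrix (Fin N) (Fin N) ℝ) :
    Matrix (Fin N) (Fin N) ℝ →L[ℝ] ℝ :=
  LinearMap.toContinuousLinearMap
    ((Matrix.traceLinearMap (Fin N) ℝ ℝ).comp (LinearMap.mulLeft ℝ W))

private theorem traceMulCLM_apply {N : ℕ} (W X : Matrix (Fin N) (Fin N) ℝ) :
    traceMulCLM W X = (W * X).trace := rfl

private theorem trace_mul_vecMulVec {N : ℕ} (M : Matrix (Fin N) (Fin N) ℝ) (u v : Fin N → ℝ) :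
    (M * vecMulVec u v).trace = v ⬝ᵥ (M *ᵥ u) := by
  simp only [Matrix.trace, Matrix.diag, Matrix.mul_apply, vecMulVec_apply, dotProduct, mulVec,
    Finset.mul_sum, Finset.sum_mul]
  congr 1; ext i; congr 1; ext j; ring


private theorem vecMulVec_mulVec_aux {N : ℕ} (u v x : Fin N → ℝ) :
    vecMulVec u v *ᵥ x = (v ⬝ᵥ x) • u := by
  funext i
  simp [mulVec, vecMulVec_apply, dotProduct, Finset.mul_sum, mul_comm, mul_left_comm]

private theorem dot_symm {N : ℕ} {M : Matrix (Fin N) (Fin N) ℝ} (hM : Mᵀ = M)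
    (x y : Fin N → ℝ) : x ⬝ᵥ (M *ᵥ y) = y ⬝ᵥ (M *ᵥ x) := by
  have h : ∀ i j, M i j = M j i := fun i j => by conv_lhs => rw [← hM, Matrix.transpose_apply]
  simp only [dotProduct, mulVec, dotProduct, Finset.mul_sum]
  rw [Finset.sum_comm]
  refine Finset.sum_congr rfl fun i _ => Finset.sum_congr rfl fun j _ => ?_
  rw [h j i]; ring

private theorem hasDerivAt_ringInverse_aux {N : ℕ} (M B : Matrix (Fin N) (Fin N) ℝ)
    (hM : IsUnit M) :
    HasDerivAt (fun t : ℝ => Ring.inverse (M + t • B)) (-(M⁻¹ * B * M⁻¹)) 0 := by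
  obtain ⟨u, rfl⟩ := hM
  have h1 : HasDerivAt (fun t : ℝ => (u : Matrix (Fin N) (Fin N) ℝ) + t • B) B 0 :=
    ((hasDerivAt_id 0).smul_const B).const_add _ |>.congr_deriv (by simp)
  have h2 : HasFDerivAt Ring.inverse
      (-(ContinuousLinearMap.mulLeftRight ℝ (Matrix (Fin N) (Fin N) ℝ) ↑u⁻¹) ↑u⁻¹)
      ((fun t : ℝ => (u : Matrix (Fin N) (Fin N) ℝ) + t • B) 0) := by
    simpa using hasFDerivAt_ringInverse (𝕜 := ℝ) u
  have h3 := h2.comp_hasDerivAt 0 h1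
  simp [Matrix.coe_units_inv, mul_assoc] at h3 ⊢
  exact h3

/-- Inner derivative: for invertible `M`, the derivative in `t` at `0` of
`trace (W * (M + t • C)⁻¹)`. -/
private theorem inner_deriv {N : ℕ} (W M C : Matrix (Fin N) (Fin N) ℝ) (hM : IsUnit M) :
    deriv (fun t : ℝ => (W * (M + t • C)⁻¹).trace) 0
      = -(W * (M⁻¹ * C * M⁻¹)).trace := by
  have h := ((traceMulCLM W).hasFDerivAt.comp_hasDerivAt 0
    (hasDerivAt_ringInverse_aux M C hM))
  have h2 : HasDerivAt (fun t : ℝ => (W * (M + t • C)⁻¹).trace)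
      (-(W * (M⁻¹ * C * M⁻¹)).trace) 0 := by
    simp only [Function.comp_def, traceMulCLM_apply, Matrix.nonsing_inv_eq_ringInverse] at h ⊢
    exact h.congr_deriv ((traceMulCLM_apply W _).trans (by simp))
  exact h2.deriv

/-- For `L` real symmetric positive definite, `W` real symmetric,
and vectors `a, c`, the mixed second partial derivative at `(0, 0)` of
`g(s, t) = trace(W·(L + s·a·aᵀ + t·c·cᵀ)⁻¹)` equals
`2·(cᵀ·L⁻¹·W·L⁻¹·a)·(cᵀ·L⁻¹·a)`. -/
theorem mixed_partial_trace_inv (N : ℕ)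
    (L W : Matrix (Fin N) (Fin N) ℝ)
    (hL : L.PosDef) (hW : W.IsSymm) (a c : Fin N → ℝ) :
    deriv (fun s : ℝ => deriv (fun t : ℝ =>
        (W * (L + s • Matrix.vecMulVec a a + t • Matrix.vecMulVec c c)⁻¹).trace) 0) 0
      = 2 * (c ⬝ᵥ (L⁻¹ *ᵥ (W *ᵥ (L⁻¹ *ᵥ a)))) * (c ⬝ᵥ (L⁻¹ *ᵥ a)) := by
  set A := Matrix.vecMulVec a a with hA
  set C := Matrix.vecMulVec c c with hC
  have hLu : IsUnit L := hL.isUnit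
  -- eventually, L + s • A is a unit
  have hev : ∀ᶠ s : ℝ in nhds 0, IsUnit (L + s • A) := by
    have hcont : Continuous fun s : ℝ => (L + s • A).det :=
      (continuous_const.add ((continuous_id.smul continuous_const))).matrix_det
    have h0 : (L + (0 : ℝ) • A).det ≠ 0 := by
      simpa using hL.det_pos.ne'
    have := hcont.continuousAt (x := 0) |>.eventually_ne (by simpa using h0)
    filter_upwards [this] with s hs
    exact (Matrix.isUnit_iff_isUnit_det _).2 hs.isUnit
  -- the inner derivative equals G on a neighborhood of 0
  have heq : (fun s : ℝ => deriv (fun t : ℝ =>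
        (W * (L + s • A + t • C)⁻¹).trace) 0)
      =ᶠ[nhds 0] fun s : ℝ =>
        -(W * ((L + s • A)⁻¹ * C * (L + s • A)⁻¹)).trace := by
    filter_upwards [hev] with s hs
    exact inner_deriv W (L + s • A) C hs
  rw [heq.deriv_eq]
  -- now differentiate G in s
  set Li := L⁻¹ with hLi
  have hX : HasDerivAt (fun s : ℝ => Ring.inverse (L + s • A)) (-(Li * A * Li)) 0 :=
    hasDerivAt_ringInverse_aux L A hLu
  have hmul : HasDerivAt (fun s : ℝ =>
      (Ring.inverse (L + s • A) * C) * Ring.inverse (L + s • A))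
      ((-(Li * A * Li) * C) * Ring.inverse (L + (0:ℝ) • A)
        + (Ring.inverse (L + (0:ℝ) • A) * C) * -(Li * A * Li)) 0 :=
    (hX.mul_const C).mul hX
  have h0inv : Ring.inverse (L + (0:ℝ) • A) = Li := by
    simp [← Matrix.nonsing_inv_eq_ringInverse, hLi]
  rw [h0inv] at hmul
  have htr := (traceMulCLM (-W)).hasFDerivAt.comp_hasDerivAt 0 hmul
  have hfun : (fun s : ℝ => traceMulCLM (-W)
      ((Ring.inverse (L + s • A) * C) * Ring.inverse (L + s • A)))
      = fun s : ℝ => -(W * ((L + s • A)⁻¹ * C * (L + s • A)⁻¹)).trace := by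
    funext s
    simp [traceMulCLM_apply, Matrix.nonsing_inv_eq_ringInverse, Matrix.neg_mul,
      Matrix.mul_assoc]
  have hval : traceMulCLM (-W) ((-(Li * A * Li) * C) * Li + (Li * C) * -(Li * A * Li))
      = (W * (Li * A * Li * C * Li)).trace + (W * (Li * C * (Li * A * Li))).trace := by
    simp only [traceMulCLM_apply, Matrix.mul_add, Matrix.neg_mul, Matrix.mul_neg,
      Matrix.trace_neg, neg_neg, Matrix.mul_assoc, Matrix.trace_add]
  rw [Function.comp_def, hfun] at htr
  have hG := htr.congr_deriv hval
  rw [hG.deriv]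
  -- symmetry facts
  have hLsy : Liᵀ = Li := by
    have := hL.1.inv
    rwa [Matrix.IsHermitian, Matrix.conjTranspose_eq_transpose_of_trivial] at this
  -- scalar identification
  have key1 : (W * (Li * A * Li * C * Li)).trace
      = (c ⬝ᵥ (Li *ᵥ (W *ᵥ (Li *ᵥ a)))) * (c ⬝ᵥ (Li *ᵥ a)) := by
    rw [show W * (Li * A * Li * C * Li) = (W * Li * A) * (Li * C * Li) from by
      simp only [Matrix.mul_assoc]]
    rw [Matrix.trace_mul_comm]
    rw [show Li * C * Li * (W * Li * A) = (Li * (C * (Li * (W * Li)))) * vecMulVec a a from by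
      rw [hA]; simp only [Matrix.mul_assoc]]
    rw [trace_mul_vecMulVec]
    simp only [← Matrix.mulVec_mulVec, hC, vecMulVec_mulVec_aux, Matrix.mulVec_smul,
      dotProduct_smul, smul_eq_mul]
    rw [dot_symm hLsy a c]
  have hM2 : (Li * (W * Li))ᵀ = Li * (W * Li) := by
    rw [Matrix.transpose_mul, Matrix.transpose_mul, hLsy, hW.eq, ← Matrix.mul_assoc,
      Matrix.mul_assoc]
  have key2 : (W * (Li * C * (Li * A * Li))).trace
      = (c ⬝ᵥ (Li *ᵥ (W *ᵥ (Li *ᵥ a)))) * (c ⬝ᵥ (Li *ᵥ a)) := by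
    rw [show W * (Li * C * (Li * A * Li)) = (W * Li * C * Li * A) * Li from by
      simp only [Matrix.mul_assoc]]
    rw [Matrix.trace_mul_comm]
    rw [show Li * (W * Li * C * Li * A) = (Li * (W * (Li * (C * Li)))) * vecMulVec a a from by
      rw [hA]; simp only [Matrix.mul_assoc]]
    rw [trace_mul_vecMulVec]
    simp only [← Matrix.mulVec_mulVec, hC, vecMulVec_mulVec_aux, Matrix.mulVec_smul,
      dotProduct_smul, smul_eq_mul]
    rw [show Li *ᵥ (W *ᵥ (Li *ᵥ c)) = (Li * (W * Li)) *ᵥ c from by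
      simp only [Matrix.mulVec_mulVec, Matrix.mul_assoc]]
    rw [dot_symm hM2 a c]
    rw [show (Li * (W * Li)) *ᵥ a = Li *ᵥ (W *ᵥ (Li *ᵥ a)) from by
      simp only [Matrix.mulVec_mulVec, Matrix.mul_assoc]]
    ring
  rw [key1, key2]; ring
end

section
/- Let L be an N×N real symmetric positive definite matrix and let W = Σ_{(k,l)} w_{kl}·(e_k − e_l)·(e_k − e_l)ᵀ with all w_{kl} ≥ 0 and at least one w_{kl} > 0. Fix indices i, j, m, n and set a_{ij} = e_i − e_j, a_{mn} = e_m − e_n. Suppose that for every pair (k, l) with w_{kl} > 0: (i) ([L^{-1}]_{ik} − [L^{-1}]_{il}) − ([L^{-1}]_{jk} − [L^{-1}]_{jl}) > 0, (ii) ([L^{-1}]_{mk} − [L^{-1}]_{ml}) − ([L^{-1}]_{nk} − [L^{-1}]_{nl}) > 0, and also (iii) ([L^{-1}]_{im} − [L^{-1}]_{in}) − ([L^{-1}]_{jm} − [L^{-1}]_{jn}) > 0. Then (a_{mn}ᵀ·L^{-1}·W·L^{-1}·a_{ij})·(a_{mn}ᵀ·L^{-1}·a_{ij}) > 0; consequently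 the mixed second partial derivative of the function (s, t) ↦ trace(W·(L + s·a_{ij}·a_{ij}ᵀ + t·a_{mn}·a_{mn}ᵀ)^{-1}) at (0, 0) is strictly positive, while each of its first partial derivatives at (0, 0) is nonpositive. -/
open Matrix

attribute [local instance] Matrix.linftyOpNormedRing Matrix.linftyOpNormedAlgebra

namespace SupermodAux

variable {N : ℕ}

lemma mul_vecMulVec (A : Matrix (Fin N) (Fin N) ℝ) (u v : Fin N → ℝ) :
    A * vecMulVec u v = vecMulVec (A *ᵥ u) v := by
  ext i j
  simp [Matrix.mul_apply, vecMulVec_apply, Matrix.mulVec, dotProduct, Finset.sum_mul, mul_assoc]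

lemma vecMulVec_mul (u v : Fin N → ℝ) (A : Matrix (Fin N) (Fin N) ℝ) :
    vecMulVec u v * A = vecMulVec u (v ᵥ* A) := by
  ext i j
  simp [Matrix.mul_apply, vecMulVec_apply, Matrix.vecMul, dotProduct, Finset.mul_sum, mul_assoc]

lemma trace_vecMulVec (u v : Fin N → ℝ) : (vecMulVec u v).trace = v ⬝ᵥ u := by
  simp [Matrix.trace, vecMulVec_apply, dotProduct, Matrix.diag, mul_comm]

lemma vecMulVec_mulVec (u v x : Fin N → ℝ) : vecMulVec u v *ᵥ x = (v ⬝ᵥ x) • u := by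
  ext i
  simp only [Matrix.mulVec, vecMulVec_apply, dotProduct, Pi.smul_apply, smul_eq_mul,
    Finset.sum_mul]
  exact Finset.sum_congr rfl fun k _ => by ring

lemma vecMul_vecMulVec (v x y : Fin N → ℝ) : v ᵥ* vecMulVec x y = (v ⬝ᵥ x) • y := by
  ext j
  simp only [Matrix.vecMul, vecMulVec_apply, dotProduct, Pi.smul_apply, smul_eq_mul,
    Finset.sum_mul]
  exact Finset.sum_congr rfl fun k _ => by ring

lemma vecMulVec_mul_vecMulVec (u v x y : Fin N → ℝ) :
    vecMulVec u v * vecMulVec x y = (v ⬝ᵥ x) • vecMulVec u y := by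
  rw [vecMulVec_mul, vecMul_vecMulVec]
  ext i j
  simp [vecMulVec_apply, mul_comm, mul_assoc, mul_left_comm]

lemma sum_mulVec (s : Finset (Fin N × Fin N)) (f : Fin N × Fin N → Matrix (Fin N) (Fin N) ℝ)
    (x : Fin N → ℝ) : (∑ p ∈ s, f p) *ᵥ x = ∑ p ∈ s, f p *ᵥ x := by
  ext i
  rw [Finset.sum_apply]
  simp only [Matrix.mulVec, dotProduct, Matrix.sum_apply, Finset.sum_mul]
  exact Finset.sum_comm

lemma mulVec_sumv (A : Matrix (Fin N) (Fin N) ℝ) (s : Finset (Fin N × Fin N))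
    (f : Fin N × Fin N → (Fin N → ℝ)) :
    A *ᵥ (∑ p ∈ s, f p) = ∑ p ∈ s, A *ᵥ f p := by
  ext i
  simp only [Matrix.mulVec, dotProduct, Finset.sum_apply, Finset.mul_sum]
  exact Finset.sum_comm

lemma dot_sum (u : Fin N → ℝ) (s : Finset (Fin N × Fin N)) (f : Fin N × Fin N → (Fin N → ℝ)) :
    u ⬝ᵥ (∑ p ∈ s, f p) = ∑ p ∈ s, u ⬝ᵥ f p := by
  simp only [dotProduct, Finset.sum_apply, Finset.mul_sum]
  exact Finset.sum_comm

lemma single_dot (A : Matrix (Fin N) (Fin N) ℝ) (a b c d : Fin N) :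
    ((Pi.single a 1 - Pi.single b 1) : Fin N → ℝ) ⬝ᵥ
      (A *ᵥ ((Pi.single c 1 : Fin N → ℝ) - Pi.single d 1))
      = (A a c - A a d) - (A b c - A b d) := by
  simp [Matrix.mulVec_sub, dotProduct_sub, sub_dotProduct, Matrix.mulVec_single]
  ring

lemma key_deriv (M Q W : Matrix (Fin N) (Fin N) ℝ) (hM : IsUnit M) :
    HasDerivAt (fun t : ℝ => (W * (M + t • Q)⁻¹).trace)
      (-(W * (M⁻¹ * Q * M⁻¹)).trace) 0 := by
  have hfun : (fun t : ℝ => (W * (M + t • Q)⁻¹).trace)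
      = fun t : ℝ => (W * Ring.inverse (M + t • Q)).trace := by
    funext t; rw [Matrix.nonsing_inv_eq_ringInverse]
  rw [hfun]
  obtain ⟨u, rfl⟩ := hM
  have h0 : HasDerivAt (fun t : ℝ => (u : Matrix (Fin N) (Fin N) ℝ) + t • Q) Q 0 := by
    have := ((hasDerivAt_id (0:ℝ)).smul_const Q).const_add (u : Matrix (Fin N) (Fin N) ℝ)
    rwa [one_smul] at this
  have hinv : HasFDerivAt Ring.inverse
      (-(ContinuousLinearMap.mulLeftRight ℝ (Matrix (Fin N) (Fin N) ℝ) ↑u⁻¹ ↑u⁻¹))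
      ((u : Matrix (Fin N) (Fin N) ℝ) + (0:ℝ) • Q) := by
    simpa using hasFDerivAt_ringInverse (𝕜 := ℝ) u
  have hc : HasDerivAt (fun t : ℝ => Ring.inverse ((u : Matrix (Fin N) (Fin N) ℝ) + t • Q))
      (-(((u : Matrix (Fin N) (Fin N) ℝ))⁻¹ * Q * ((u : Matrix (Fin N) (Fin N) ℝ))⁻¹)) 0 := by
    have := hinv.comp_hasDerivAt (0:ℝ) h0
    simp only [Matrix.coe_units_inv] at this
    exact this
  have hmul := hc.const_mul W
  have htr := (Matrix.traceLinearMap (Fin N) ℝ ℝ).toContinuousLinearMap.hasFDerivAt.comp_hasDerivAt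
      (0:ℝ) hmul
  convert htr using 1
  · rfl
  · rfl
  · rfl
  · change _ = Matrix.trace (_ : Matrix (Fin N) (Fin N) ℝ)
    simp [Matrix.trace_neg]

lemma key_deriv2 (L P Q W : Matrix (Fin N) (Fin N) ℝ) (hL : IsUnit L) :
    HasDerivAt (fun s : ℝ => -(W * ((L + s • P)⁻¹ * Q * (L + s • P)⁻¹)).trace)
      ((W * (L⁻¹ * P * L⁻¹ * Q * L⁻¹)).trace + (W * (L⁻¹ * Q * L⁻¹ * P * L⁻¹)).trace) 0 := by
  have hfun : (fun s : ℝ => -(W * ((L + s • P)⁻¹ * Q * (L + s • P)⁻¹)).trace)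
      = fun s : ℝ =>
        -(W * (Ring.inverse (L + s • P) * Q * Ring.inverse (L + s • P))).trace := by
    funext s; rw [Matrix.nonsing_inv_eq_ringInverse]
  rw [hfun]
  obtain ⟨u, rfl⟩ := hL
  set A : Matrix (Fin N) (Fin N) ℝ := ((u : Matrix (Fin N) (Fin N) ℝ))⁻¹ with hA
  have h0 : HasDerivAt (fun s : ℝ => (u : Matrix (Fin N) (Fin N) ℝ) + s • P) P 0 := by
    have := ((hasDerivAt_id (0:ℝ)).smul_const P).const_add (u : Matrix (Fin N) (Fin N) ℝ)
    rwa [one_smul] at this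
  have hinv : HasFDerivAt Ring.inverse
      (-(ContinuousLinearMap.mulLeftRight ℝ (Matrix (Fin N) (Fin N) ℝ) ↑u⁻¹ ↑u⁻¹))
      ((u : Matrix (Fin N) (Fin N) ℝ) + (0:ℝ) • P) := by
    simpa using hasFDerivAt_ringInverse (𝕜 := ℝ) u
  have hX : HasDerivAt (fun s : ℝ => Ring.inverse ((u : Matrix (Fin N) (Fin N) ℝ) + s • P))
      (-(A * P * A)) 0 := by
    have := hinv.comp_hasDerivAt (0:ℝ) h0
    simp only [hA, Matrix.coe_units_inv] at this
    exact this
  have hX0 : Ring.inverse ((u : Matrix (Fin N) (Fin N) ℝ) + (0:ℝ) • P) = A := by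
    rw [← Matrix.nonsing_inv_eq_ringInverse]; simp [hA]
  have h2 := (hX.mul_const Q).mul hX
  have h3 := (h2.const_mul W)
  have htr := (Matrix.traceLinearMap (Fin N) ℝ ℝ).toContinuousLinearMap.hasFDerivAt.comp_hasDerivAt
      (0:ℝ) h3
  have h4 := htr.neg
  convert h4 using 1
  · rfl
  · rfl
  · rfl
  rw [hX0]
  simp only [Function.comp_def, LinearMap.coe_toContinuousLinearMap,
    Matrix.traceLinearMap_apply, Matrix.neg_mul, Matrix.mul_neg, neg_neg, Matrix.mul_add,
    Matrix.trace_add, Matrix.trace_neg, neg_add, mul_assoc, map_add, map_neg]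
  change _ = -Matrix.trace (_ : Matrix (Fin N) (Fin N) ℝ)
  simp [Matrix.trace_add, Matrix.trace_neg]
  exact add_comm _ _

end SupermodAux


/-- paper's Theorem 1: under the stated sign conditions on the
entries of `L⁻¹`, the stability objective is supermodular and decreasing in the
addition of the edges `(i,j)` and `(m,n)`: the product
`(a_{mn}ᵀ·L⁻¹·W·L⁻¹·a_{ij})·(a_{mn}ᵀ·L⁻¹·a_{ij})` is strictly positive, hence
the mixed second partial derivative at `(0,0)` of
`(s, t) ↦ trace(W·(L + s·a_{ij}·a_{ij}ᵀ + t·a_{mn}·a_{mn}ᵀ)⁻¹)` is strictly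
positive, while each first partial derivative at `(0,0)` is nonpositive. -/
theorem supermodularity_of_edge_addition (N : ℕ)
    (L : Matrix (Fin N) (Fin N) ℝ) (hL : L.PosDef)
    (P : Finset (Fin N × Fin N)) (w : Fin N × Fin N → ℝ)
    (hw_nonneg : ∀ p ∈ P, 0 ≤ w p) (hw_pos : ∃ p ∈ P, 0 < w p)
    (W : Matrix (Fin N) (Fin N) ℝ)
    (hW : W = ∑ p ∈ P, w p •
      Matrix.vecMulVec ((Pi.single p.1 1 : Fin N → ℝ) - Pi.single p.2 1)
        ((Pi.single p.1 1 : Fin N → ℝ) - Pi.single p.2 1))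
    (i j m n : Fin N)
    (aij amn : Fin N → ℝ)
    (haij : aij = (Pi.single i 1 : Fin N → ℝ) - Pi.single j 1)
    (hamn : amn = (Pi.single m 1 : Fin N → ℝ) - Pi.single n 1)
    (hcond1 : ∀ p ∈ P, 0 < w p →
      0 < (L⁻¹ i p.1 - L⁻¹ i p.2) - (L⁻¹ j p.1 - L⁻¹ j p.2))
    (hcond2 : ∀ p ∈ P, 0 < w p →
      0 < (L⁻¹ m p.1 - L⁻¹ m p.2) - (L⁻¹ n p.1 - L⁻¹ n p.2))
    (hcond3 : 0 < (L⁻¹ i m - L⁻¹ i n) - (L⁻¹ j m - L⁻¹ j n)) :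
    0 < (amn ⬝ᵥ (L⁻¹ *ᵥ (W *ᵥ (L⁻¹ *ᵥ aij)))) * (amn ⬝ᵥ (L⁻¹ *ᵥ aij)) ∧
    0 < deriv (fun s : ℝ => deriv (fun t : ℝ =>
        (W * (L + s • Matrix.vecMulVec aij aij
          + t • Matrix.vecMulVec amn amn)⁻¹).trace) 0) 0 ∧
    deriv (fun s : ℝ =>
        (W * (L + s • Matrix.vecMulVec aij aij
          + (0 : ℝ) • Matrix.vecMulVec amn amn)⁻¹).trace) 0 ≤ 0 ∧
    deriv (fun t : ℝ =>
        (W * (L + (0 : ℝ) • Matrix.vecMulVec aij aij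
          + t • Matrix.vecMulVec amn amn)⁻¹).trace) 0 ≤ 0 := by
  classical
  have hLunit : IsUnit L :=
    (Matrix.isUnit_iff_isUnit_det L).mpr (isUnit_iff_ne_zero.mpr hL.det_pos.ne')
  have hTsym : Lᵀ = L := by
    ext a c
    simpa [Matrix.conjTranspose_apply] using congrFun (congrFun hL.isHermitian a) c
  have hIsym : (L⁻¹)ᵀ = L⁻¹ := by rw [Matrix.transpose_nonsing_inv, hTsym]
  have hIsym' : ∀ a c, L⁻¹ a c = L⁻¹ c a := fun a c => by
    conv_lhs => rw [← hIsym]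
    rw [Matrix.transpose_apply]
  have hvsym : ∀ z : Fin N → ℝ, z ᵥ* L⁻¹ = L⁻¹ *ᵥ z := fun z => by
    conv_lhs => rw [← hIsym]
    exact Matrix.vecMul_transpose _ _
  have hswap : ∀ x z : Fin N → ℝ, (L⁻¹ *ᵥ x) ⬝ᵥ z = x ⬝ᵥ (L⁻¹ *ᵥ z) := fun x z => by
    rw [dotProduct_comm, Matrix.dotProduct_mulVec, hvsym]
    exact dotProduct_comm _ _
  set b : Fin N × Fin N → (Fin N → ℝ) :=
    fun p => (Pi.single p.1 1 : Fin N → ℝ) - Pi.single p.2 1 with hb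
  have hWsym : Wᵀ = W := by
    rw [hW, Matrix.transpose_sum]
    refine Finset.sum_congr rfl fun p _ => ?_
    rw [Matrix.transpose_smul]
    congr 1
    ext a c
    simp [Matrix.vecMulVec_apply, mul_comm]
  have hWv : ∀ y : Fin N → ℝ, W *ᵥ y = ∑ p ∈ P, (w p * (b p ⬝ᵥ y)) • b p := by
    intro y
    rw [hW, SupermodAux.sum_mulVec]
    refine Finset.sum_congr rfl fun p _ => ?_
    rw [Matrix.smul_mulVec, SupermodAux.vecMulVec_mulVec, smul_smul]
  have hbilsum : ∀ y z : Fin N → ℝ, z ⬝ᵥ (L⁻¹ *ᵥ (W *ᵥ y))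
      = ∑ p ∈ P, w p * ((b p ⬝ᵥ y) * (z ⬝ᵥ (L⁻¹ *ᵥ b p))) := by
    intro y z
    rw [hWv, SupermodAux.mulVec_sumv, SupermodAux.dot_sum]
    refine Finset.sum_congr rfl fun p _ => ?_
    rw [Matrix.mulVec_smul, dotProduct_smul, smul_eq_mul, mul_assoc]
  have hentry1 : ∀ p ∈ P, 0 < w p → 0 < b p ⬝ᵥ (L⁻¹ *ᵥ aij) := by
    intro p hp hwp
    have h := hcond1 p hp hwp
    rw [hb, haij]
    rw [SupermodAux.single_dot]
    rw [hIsym' p.1 i, hIsym' p.1 j, hIsym' p.2 i, hIsym' p.2 j]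
    linarith
  have hentry2 : ∀ p ∈ P, 0 < w p → 0 < amn ⬝ᵥ (L⁻¹ *ᵥ b p) := by
    intro p hp hwp
    have h := hcond2 p hp hwp
    rw [hb, hamn, SupermodAux.single_dot]
    linarith
  have hc1 : 0 < amn ⬝ᵥ (L⁻¹ *ᵥ (W *ᵥ (L⁻¹ *ᵥ aij))) := by
    rw [hbilsum]
    refine Finset.sum_pos' (fun p hp => ?_) ?_
    · rcases eq_or_lt_of_le (hw_nonneg p hp) with h | h
      · rw [← h]; simp
      · exact le_of_lt (mul_pos h (mul_pos (hentry1 p hp h) (hentry2 p hp h)))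
    · obtain ⟨p, hp, hwp⟩ := hw_pos
      exact ⟨p, hp, mul_pos hwp (mul_pos (hentry1 p hp hwp) (hentry2 p hp hwp))⟩
  have hc2 : 0 < amn ⬝ᵥ (L⁻¹ *ᵥ aij) := by
    rw [hamn, haij, SupermodAux.single_dot]
    rw [hIsym' m i, hIsym' m j, hIsym' n i, hIsym' n j]
    linarith
  have hT0 : ∀ x : Fin N → ℝ, (W * (L⁻¹ * vecMulVec x x * L⁻¹)).trace
      = (L⁻¹ *ᵥ x) ⬝ᵥ (W *ᵥ (L⁻¹ *ᵥ x)) := by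
    intro x
    rw [SupermodAux.mul_vecMulVec L⁻¹ x x, SupermodAux.vecMulVec_mul,
      SupermodAux.mul_vecMulVec, SupermodAux.trace_vecMulVec, hvsym]
  have hquad : ∀ x : Fin N → ℝ, 0 ≤ x ⬝ᵥ (W *ᵥ x) := by
    intro x
    rw [hWv, SupermodAux.dot_sum]
    refine Finset.sum_nonneg fun p hp => ?_
    rw [dotProduct_smul, smul_eq_mul, dotProduct_comm (b p) x, mul_assoc]
    exact mul_nonneg (hw_nonneg p hp) (mul_self_nonneg _)
  refine ⟨mul_pos hc1 hc2, ?_, ?_, ?_⟩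
  · -- mixed second derivative
    have hcont : Continuous (fun s : ℝ => L + s • Matrix.vecMulVec aij aij) :=
      continuous_const.add (continuous_id.smul continuous_const)
    have hmem : (fun s : ℝ => L + s • Matrix.vecMulVec aij aij) 0 ∈ {x | IsUnit x} := by
      simpa using hLunit
    have hev : ∀ᶠ s in nhds (0:ℝ), IsUnit (L + s • Matrix.vecMulVec aij aij) :=
      hcont.continuousAt.eventually_mem (Units.isOpen.mem_nhds hmem)
    have heq : (fun s : ℝ => deriv (fun t : ℝ =>
          (W * (L + s • Matrix.vecMulVec aij aij + t • Matrix.vecMulVec amn amn)⁻¹).trace) 0)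
        =ᶠ[nhds 0] (fun s : ℝ => -(W * ((L + s • Matrix.vecMulVec aij aij)⁻¹
            * Matrix.vecMulVec amn amn * (L + s • Matrix.vecMulVec aij aij)⁻¹)).trace) :=
      hev.mono fun s hs => (SupermodAux.key_deriv _ _ W hs).deriv
    rw [heq.deriv_eq,
      (SupermodAux.key_deriv2 L (Matrix.vecMulVec aij aij) (Matrix.vecMulVec amn amn)
        W hLunit).deriv]
    have hT : ∀ x y : Fin N → ℝ,
        (W * (L⁻¹ * vecMulVec x x * L⁻¹ * vecMulVec y y * L⁻¹)).trace
        = ((L⁻¹ *ᵥ x) ⬝ᵥ y) * ((L⁻¹ *ᵥ y) ⬝ᵥ (W *ᵥ (L⁻¹ *ᵥ x))) := by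
      intro x y
      rw [SupermodAux.mul_vecMulVec L⁻¹ x x, SupermodAux.vecMulVec_mul,
        SupermodAux.vecMulVec_mul_vecMulVec, smul_mul_assoc, SupermodAux.vecMulVec_mul,
        Matrix.mul_smul, SupermodAux.mul_vecMulVec, Matrix.trace_smul,
        SupermodAux.trace_vecMulVec, smul_eq_mul, hvsym x, hvsym y]
    rw [hT aij amn, hT amn aij]
    have hWbil : ∀ x y : Fin N → ℝ, x ⬝ᵥ (W *ᵥ y) = y ⬝ᵥ (W *ᵥ x) := fun x y => by
      rw [Matrix.dotProduct_mulVec]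
      conv_lhs => rw [← hWsym]
      rw [Matrix.vecMul_transpose]
      exact dotProduct_comm _ _
    have e1 : (L⁻¹ *ᵥ aij) ⬝ᵥ amn = amn ⬝ᵥ (L⁻¹ *ᵥ aij) := dotProduct_comm _ _
    have e2 : (L⁻¹ *ᵥ amn) ⬝ᵥ (W *ᵥ (L⁻¹ *ᵥ aij))
        = amn ⬝ᵥ (L⁻¹ *ᵥ (W *ᵥ (L⁻¹ *ᵥ aij))) := hswap _ _
    have e3 : (L⁻¹ *ᵥ amn) ⬝ᵥ aij = amn ⬝ᵥ (L⁻¹ *ᵥ aij) := hswap amn aij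
    have e4 : (L⁻¹ *ᵥ aij) ⬝ᵥ (W *ᵥ (L⁻¹ *ᵥ amn))
        = amn ⬝ᵥ (L⁻¹ *ᵥ (W *ᵥ (L⁻¹ *ᵥ aij))) := by
      rw [hWbil, hswap]
    rw [e1, e2, e3, e4]
    nlinarith [mul_pos hc1 hc2]
  · -- first partial in s
    simp only [zero_smul, add_zero]
    rw [(SupermodAux.key_deriv L (Matrix.vecMulVec aij aij) W hLunit).deriv]
    rw [neg_nonpos]
    rw [hT0 aij]
    exact hquad _
  · -- first partial in t
    simp only [zero_smul, add_zero]
    rw [(SupermodAux.key_deriv L (Matrix.vecMulVec amn amn) W hLunit).deriv]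
    rw [neg_nonpos]
    rw [hT0 amn]
    exact hquad _
end

section
/- Let Ĝ = (V, Ê) be a connected graph on vertices V = {1, …, N+1} with positive susceptances b_e (reactances x_e = 1/b_e) on its edges, and let L̃_f be the reduced susceptance Laplacian of Ĝ (the Laplacian with the row and column of the reference node 1 removed), which is positive definite. Suppose the edge ℓ = {i, j}, with i, j ≠ 1, is a bridge of Ĝ. Then for every connected spanning edge set E ⊆ Ê, the inverse X = L̃(E)^{-1} of the reduced susceptance Laplacian of (V, E) satisfies X_{ij} ≥ ([L̃_f^{-1}]_{ii} + [L̃_f^{-1}]_{jj} − x_ℓ)/2, where x_ℓ is the reactance of edge ℓ. -/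
open Matrix

/-- The reduced incidence vector of the ordered pair of nodes `(u, v)` of a
power network on `N + 1` nodes, with node `0` taken as the reference node: the
entry at position `p : Fin N` corresponds to node `p.succ` and equals `+1` if
`p.succ = u`, `−1` if `p.succ = v`, and `0` otherwise. -/
def reducedIncidence (N : ℕ) (u v : Fin (N + 1)) : Fin N → ℝ :=
  fun p => (if (p.succ : Fin (N + 1)) = u then (1 : ℝ) else 0) -
    (if (p.succ : Fin (N + 1)) = v then (1 : ℝ) else 0)

open scoped Classical in
/-- The reduced susceptance Laplacian `L̃ = Σ_{(u,v)∈E} b_{uv}·a_{uv}·a_{uv}ᵀ`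
of a graph `H` on `N + 1` nodes with susceptances `b`, with the row and column
of the reference node `0` removed (each unordered edge is counted twice in the
double sum, whence the factor `1/2`). -/
noncomputable def reducedLaplacian (N : ℕ) (H : SimpleGraph (Fin (N + 1)))
    (b : Fin (N + 1) → Fin (N + 1) → ℝ) : Matrix (Fin N) (Fin N) ℝ :=
  (1 / 2 : ℝ) • ∑ u : Fin (N + 1), ∑ v : Fin (N + 1),
    (if H.Adj u v then b u v else 0) •
      Matrix.vecMulVec (reducedIncidence N u v) (reducedIncidence N u v)

set_option linter.unusedSectionVars false

namespace BridgeAux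

variable {n : Type*} [Fintype n] [DecidableEq n]

variable {n : Type*} [Fintype n] [DecidableEq n]

lemma mulVec_inv_cancel (A : Matrix n n ℝ) (hA : A.PosDef) (e : n → ℝ) :
    A *ᵥ (A⁻¹ *ᵥ e) = e := by
  rw [mulVec_mulVec, Matrix.mul_nonsing_inv _ hA.det_pos.ne'.isUnit, one_mulVec]

lemma quad_nonneg (A : Matrix n n ℝ) (hA : A.PosSemidef) (x : n → ℝ) :
    0 ≤ x ⬝ᵥ (A *ᵥ x) := by simpa using hA.dotProduct_mulVec_nonneg x

lemma quad_pos (A : Matrix n n ℝ) (hA : A.PosDef) (x : n → ℝ) (hx : x ≠ 0) :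
    0 < x ⬝ᵥ (A *ᵥ x) := by simpa using hA.dotProduct_mulVec_pos hx

lemma herm_dot (A : Matrix n n ℝ) (hA : A.IsHermitian) (x y : n → ℝ) :
    x ⬝ᵥ (A *ᵥ y) = (A *ᵥ x) ⬝ᵥ y := by
  have ht : Aᵀ = A := by
    rw [← conjTranspose_eq_transpose_of_trivial]; exact hA.eq
  rw [dotProduct_mulVec, ← ht, mulVec_transpose, ht]

lemma var_le (A : Matrix n n ℝ) (hA : A.PosDef) (e y : n → ℝ) :
    2 * (y ⬝ᵥ e) - y ⬝ᵥ (A *ᵥ y) ≤ e ⬝ᵥ (A⁻¹ *ᵥ e) := by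
  set w := A⁻¹ *ᵥ e with hw
  have hAw : A *ᵥ w = e := mulVec_inv_cancel A hA e
  have h0 : 0 ≤ (y - w) ⬝ᵥ (A *ᵥ (y - w)) := quad_nonneg A hA.posSemidef _
  have h1 : w ⬝ᵥ (A *ᵥ y) = e ⬝ᵥ y := by rw [herm_dot A hA.1, hAw]
  have h2 : y ⬝ᵥ (A *ᵥ w) = y ⬝ᵥ e := by rw [hAw]
  have h3 : w ⬝ᵥ (A *ᵥ w) = e ⬝ᵥ w := by rw [herm_dot A hA.1, hAw]
  have hexp : (y - w) ⬝ᵥ (A *ᵥ (y - w))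
      = y ⬝ᵥ (A *ᵥ y) - 2 * (y ⬝ᵥ e) + e ⬝ᵥ w := by
    rw [mulVec_sub, dotProduct_sub, sub_dotProduct, sub_dotProduct, h1, h2, h3,
      dotProduct_comm e y]
    ring
  rw [hexp] at h0
  linarith

lemma inv_quad_mono (A B : Matrix n n ℝ) (hA : A.PosDef) (hB : B.PosDef)
    (hBA : (B - A).PosSemidef) (e : n → ℝ) :
    e ⬝ᵥ (B⁻¹ *ᵥ e) ≤ e ⬝ᵥ (A⁻¹ *ᵥ e) := by
  set y := B⁻¹ *ᵥ e with hy
  have hBy : B *ᵥ y = e := mulVec_inv_cancel B hB e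
  have h0 : 0 ≤ y ⬝ᵥ ((B - A) *ᵥ y) := quad_nonneg _ hBA y
  have h1 : y ⬝ᵥ ((B - A) *ᵥ y) = y ⬝ᵥ e - y ⬝ᵥ (A *ᵥ y) := by
    rw [sub_mulVec, dotProduct_sub, hBy]
  have key := var_le A hA e y
  have h2 : e ⬝ᵥ (B⁻¹ *ᵥ e) = y ⬝ᵥ e := dotProduct_comm _ _
  linarith

lemma vecMulVec_mulVec' (a b y : n → ℝ) :
    vecMulVec a b *ᵥ y = (b ⬝ᵥ y) • a := by
  ext i
  simp [vecMulVec_apply, mulVec, dotProduct, Finset.mul_sum, mul_assoc, mul_comm, mul_left_comm]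

lemma dot_vecMulVec (a x : n → ℝ) :
    x ⬝ᵥ (vecMulVec a a *ᵥ x) = (x ⬝ᵥ a) ^ 2 := by
  rw [vecMulVec_mulVec', dotProduct_smul, dotProduct_comm a x, smul_eq_mul]
  ring

lemma quad_inv_le (L : Matrix n n ℝ) (hL : L.PosDef) (a : n → ℝ) (c : ℝ) (hc : 0 < c)
    (hdom : (L - c • vecMulVec a a).PosSemidef) :
    a ⬝ᵥ (L⁻¹ *ᵥ a) ≤ 1 / c := by
  set y := L⁻¹ *ᵥ a with hy
  set t := a ⬝ᵥ (L⁻¹ *ᵥ a) with ht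
  have hLy : L *ᵥ y = a := mulVec_inv_cancel L hL a
  have ht0 : 0 ≤ t := quad_nonneg _ hL.inv.posSemidef a
  have h0 : 0 ≤ y ⬝ᵥ ((L - c • vecMulVec a a) *ᵥ y) := quad_nonneg _ hdom y
  have h1 : y ⬝ᵥ (L *ᵥ y) = t := by rw [hLy, dotProduct_comm]
  have h2 : y ⬝ᵥ ((c • vecMulVec a a) *ᵥ y) = c * (t * t) := by
    rw [smul_mulVec, dotProduct_smul, vecMulVec_mulVec', dotProduct_smul]
    have hay : a ⬝ᵥ y = t := ht.symm
    rw [hay, dotProduct_comm y a, hay, smul_eq_mul, smul_eq_mul]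
  rw [sub_mulVec, dotProduct_sub, h1, h2] at h0
  rw [le_div_iff₀ hc]
  nlinarith


lemma dot_single_succ (N : ℕ) (x : Fin N → ℝ) (w : Fin (N + 1)) :
    (∑ p : Fin N, x p * (if (p.succ : Fin (N + 1)) = w then (1 : ℝ) else 0))
      = (Fin.cons (0:ℝ) x : Fin (N+1) → ℝ) w := by
  refine Fin.cases ?_ ?_ w
  · simp [Fin.succ_ne_zero]
  · intro q
    rw [Finset.sum_eq_single q]
    · simp
    · intro p _ hpq
      simp [Fin.succ_inj, hpq]
    · simp

lemma dot_incidence (N : ℕ) (x : Fin N → ℝ) (u v : Fin (N + 1)) :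
    x ⬝ᵥ reducedIncidence N u v = (Fin.cons (0:ℝ) x : Fin (N+1) → ℝ) u - (Fin.cons (0:ℝ) x : Fin (N+1) → ℝ) v := by
  simp only [reducedIncidence, dotProduct, mul_sub]
  rw [Finset.sum_sub_distrib, dot_single_succ, dot_single_succ]

lemma sum_mulVec' {α : Type*} {n : Type*} [Fintype n] (s : Finset α)
    (f : α → Matrix n n ℝ) (x : n → ℝ) :
    (∑ a ∈ s, f a) *ᵥ x = ∑ a ∈ s, f a *ᵥ x := by
  ext i
  simp only [mulVec, dotProduct, Matrix.sum_apply, Finset.sum_apply, Finset.sum_mul]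
  exact Finset.sum_comm

lemma dot_sum' {α : Type*} {n : Type*} [Fintype n] (s : Finset α)
    (f : α → (n → ℝ)) (x : n → ℝ) :
    x ⬝ᵥ (∑ a ∈ s, f a) = ∑ a ∈ s, x ⬝ᵥ f a := by
  simp only [dotProduct, Finset.sum_apply, Finset.mul_sum]
  exact Finset.sum_comm

open scoped Classical in
lemma quadForm_eq (N : ℕ) (H : SimpleGraph (Fin (N + 1)))
    (b : Fin (N + 1) → Fin (N + 1) → ℝ) (x : Fin N → ℝ) :
    x ⬝ᵥ (reducedLaplacian N H b *ᵥ x)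
      = (1 / 2 : ℝ) * ∑ u : Fin (N + 1), ∑ v : Fin (N + 1),
          (if H.Adj u v then b u v else 0) *
            ((Fin.cons (0:ℝ) x : Fin (N+1) → ℝ) u - (Fin.cons (0:ℝ) x : Fin (N+1) → ℝ) v) ^ 2 := by
  rw [reducedLaplacian, smul_mulVec, dotProduct_smul, smul_eq_mul]
  congr 1
  rw [sum_mulVec', dot_sum']
  refine Finset.sum_congr rfl fun u _ => ?_
  rw [sum_mulVec', dot_sum']
  refine Finset.sum_congr rfl fun v _ => ?_
  rw [smul_mulVec, dotProduct_smul, smul_eq_mul, dot_vecMulVec, dot_incidence]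

open scoped Classical in
lemma reducedLaplacian_isHermitian (N : ℕ) (H : SimpleGraph (Fin (N + 1)))
    (b : Fin (N + 1) → Fin (N + 1) → ℝ) :
    (reducedLaplacian N H b).IsHermitian := by
  rw [Matrix.IsHermitian, conjTranspose_eq_transpose_of_trivial, reducedLaplacian]
  rw [transpose_smul]
  congr 1
  rw [transpose_sum]
  refine Finset.sum_congr rfl fun u _ => ?_
  rw [transpose_sum]
  refine Finset.sum_congr rfl fun v _ => ?_
  rw [transpose_smul]
  congr 1
  ext i j
  simp [vecMulVec_apply, transpose_apply, mul_comm]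

open scoped Classical in
lemma reducedLaplacian_posDef (N : ℕ) (H : SimpleGraph (Fin (N + 1)))
    (b : Fin (N + 1) → Fin (N + 1) → ℝ)
    (hb : ∀ u v, H.Adj u v → 0 < b u v) (hHconn : H.Connected) :
    (reducedLaplacian N H b).PosDef := by
  refine Matrix.PosDef.of_dotProduct_mulVec_pos (reducedLaplacian_isHermitian N H b) fun x hx => ?_
  show (0:ℝ) < star x ⬝ᵥ _
  rw [star_trivial, quadForm_eq]
  set g : Fin (N + 1) → ℝ := (Fin.cons (0:ℝ) x : Fin (N+1) → ℝ) with hg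
  have term_nonneg : ∀ u v : Fin (N + 1),
      0 ≤ (if H.Adj u v then b u v else 0) * (g u - g v) ^ 2 := by
    intro u v
    by_cases h : H.Adj u v
    · simp only [h, if_true]
      exact mul_nonneg (hb u v h).le (sq_nonneg _)
    · simp [h]
  have hS : 0 ≤ ∑ u : Fin (N+1), ∑ v : Fin (N+1),
      (if H.Adj u v then b u v else 0) * (g u - g v) ^ 2 :=
    Finset.sum_nonneg fun u _ => Finset.sum_nonneg fun v _ => term_nonneg u v
  rcases hS.lt_or_eq with h | h
  · linarith
  · exfalso
    have hzero : ∀ u v, H.Adj u v → g u = g v := by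
      intro u v huv
      have h1 := (Finset.sum_eq_zero_iff_of_nonneg
        (fun u _ => Finset.sum_nonneg fun v _ => term_nonneg u v)).mp h.symm u
        (Finset.mem_univ u)
      have h2 := (Finset.sum_eq_zero_iff_of_nonneg
        (fun v _ => term_nonneg u v)).mp h1 v (Finset.mem_univ v)
      rw [if_pos huv, mul_eq_zero] at h2
      rcases h2 with hb0 | hsq
      · exact absurd hb0 (hb u v huv).ne'
      · have := pow_eq_zero_iff (n := 2) (by norm_num) |>.mp hsq
        linarith [this]
    have hconst : ∀ u v, ∀ _ : H.Walk u v, g u = g v := by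
      intro u v w
      induction w with
      | nil => rfl
      | cons h p ih => exact (hzero _ _ h).trans ih
    have hgz : ∀ u, g u = 0 := by
      intro u
      obtain ⟨w⟩ := hHconn.preconnected 0 u
      rw [← hconst _ _ w]
      simp [hg]
    apply hx
    funext p
    have := hgz p.succ
    simpa [hg] using this

open scoped Classical in
lemma sub_posSemidef (N : ℕ) (Gh H : SimpleGraph (Fin (N + 1)))
    (b : Fin (N + 1) → Fin (N + 1) → ℝ)
    (hb_pos : ∀ u v, Gh.Adj u v → 0 < b u v) (hle : H ≤ Gh) :
    (reducedLaplacian N Gh b - reducedLaplacian N H b).PosSemidef := by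
  refine Matrix.PosSemidef.of_dotProduct_mulVec_nonneg ?_ ?_
  · exact (reducedLaplacian_isHermitian N Gh b).sub (reducedLaplacian_isHermitian N H b)
  · intro x
    show (0:ℝ) ≤ star x ⬝ᵥ _
    rw [star_trivial, sub_mulVec, dotProduct_sub, quadForm_eq, quadForm_eq, ← mul_sub,
      ← Finset.sum_sub_distrib]
    refine mul_nonneg (by norm_num) (Finset.sum_nonneg fun u _ => ?_)
    rw [← Finset.sum_sub_distrib]
    refine Finset.sum_nonneg fun v _ => ?_
    rw [← sub_mul]
    refine mul_nonneg ?_ (sq_nonneg _)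
    by_cases hH : H.Adj u v
    · have hG : Gh.Adj u v := hle hH
      simp [hH, hG]
    · by_cases hG : Gh.Adj u v
      · simp only [hH, hG, if_true, if_false, sub_zero]
        exact (hb_pos u v hG).le
      · simp [hH, hG]

lemma smul_vecMulVec_isHermitian {n : Type*} [Fintype n] (c : ℝ) (a : n → ℝ) :
    (c • vecMulVec a a).IsHermitian := by
  rw [Matrix.IsHermitian, conjTranspose_eq_transpose_of_trivial, transpose_smul]
  congr 1
  ext i j
  simp [vecMulVec_apply, transpose_apply, mul_comm]

open scoped Classical in
lemma edge_posSemidef (N : ℕ) (H : SimpleGraph (Fin (N + 1)))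
    (b : Fin (N + 1) → Fin (N + 1) → ℝ)
    (hb : ∀ u v, H.Adj u v → 0 < b u v)
    (hb_symm : ∀ u v, b u v = b v u)
    (iv jv : Fin (N + 1)) (hadj : H.Adj iv jv) :
    (reducedLaplacian N H b -
      b iv jv • vecMulVec (reducedIncidence N iv jv) (reducedIncidence N iv jv)).PosSemidef := by
  refine Matrix.PosSemidef.of_dotProduct_mulVec_nonneg ?_ ?_
  · exact (reducedLaplacian_isHermitian N H b).sub (smul_vecMulVec_isHermitian _ _)
  · intro x
    show (0:ℝ) ≤ star x ⬝ᵥ _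
    rw [star_trivial, sub_mulVec, dotProduct_sub, quadForm_eq, smul_mulVec,
      dotProduct_smul, smul_eq_mul, dot_vecMulVec, dot_incidence]
    set g : Fin (N + 1) → ℝ := (Fin.cons (0:ℝ) x : Fin (N+1) → ℝ) with hg
    set f : Fin (N + 1) → Fin (N + 1) → ℝ :=
      fun u v => (if H.Adj u v then b u v else 0) * (g u - g v) ^ 2 with hf
    have term_nonneg : ∀ u v : Fin (N + 1), 0 ≤ f u v := by
      intro u v
      by_cases h : H.Adj u v
      · exact mul_nonneg (by simp [hf, h, (hb u v h).le]) (sq_nonneg _)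
      · simp [hf, h]
    have hne : iv ≠ jv := hadj.ne
    have hpairne : ((iv, jv) : Fin (N+1) × Fin (N+1)) ≠ (jv, iv) := by
      simp [Prod.ext_iff, hne]
    have key : f iv jv + f jv iv ≤ ∑ u : Fin (N+1), ∑ v : Fin (N+1), f u v := by
      have hq : ∑ p ∈ ({(iv, jv), (jv, iv)} : Finset (Fin (N+1) × Fin (N+1))),
          f p.1 p.2 = f iv jv + f jv iv := Finset.sum_pair hpairne
      rw [← Finset.sum_product', ← hq]
      refine Finset.sum_le_sum_of_subset_of_nonneg ?_ (fun p _ _ => term_nonneg p.1 p.2)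
      intro p _
      simp [Finset.mem_product]
    have hfij : f iv jv = b iv jv * (g iv - g jv) ^ 2 := by simp [hf, hadj]
    have hfji : f jv iv = b iv jv * (g iv - g jv) ^ 2 := by
      simp only [hf, hadj.symm, if_true]
      rw [← hb_symm iv jv]
      ring
    rw [hfij, hfji] at key
    linarith

end BridgeAux

/-- paper's Corollary 1, inequality (10) with `ε = 0`: for a
connected candidate graph `Ĝ` on nodes `{0, …, N}` (reference node `0`) with
positive susceptances `b` on its edges and positive definite reduced Laplacian
`L̃_f`, if the edge `ℓ = {i.succ, j.succ}` (not touching the reference node) is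
a bridge of `Ĝ`, then for every connected spanning subgraph of `Ĝ`, the inverse
`X` of its reduced susceptance Laplacian satisfies
`X i j ≥ ([L̃_f⁻¹] i i + [L̃_f⁻¹] j j − x_ℓ)/2`, where `x_ℓ = 1/b` is the
reactance of the edge `ℓ`. -/
theorem bridge_offdiag_lower_bound (N : ℕ)
    (Ghat : SimpleGraph (Fin (N + 1))) (hconn : Ghat.Connected)
    (b : Fin (N + 1) → Fin (N + 1) → ℝ)
    (hb_symm : ∀ u v, b u v = b v u)
    (hb_pos : ∀ u v, Ghat.Adj u v → 0 < b u v)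
    (hLf : (reducedLaplacian N Ghat b).PosDef)
    (i j : Fin N)
    (hbridge : Ghat.IsBridge s(i.succ, j.succ))
    (H : SimpleGraph (Fin (N + 1))) (hle : H ≤ Ghat) (hHconn : H.Connected) :
    ((reducedLaplacian N Ghat b)⁻¹ i i + (reducedLaplacian N Ghat b)⁻¹ j j
        - 1 / b i.succ j.succ) / 2 ≤ (reducedLaplacian N H b)⁻¹ i j := by
  classical
  have hGadj : Ghat.Adj i.succ j.succ := hbridge.reachable_iff_adj.mp (hconn.preconnected _ _)
  have hHadj : H.Adj i.succ j.succ := by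
    by_contra hnot
    have hle' : H ≤ Ghat \ SimpleGraph.fromEdgeSet {s(i.succ, j.succ)} := by
      intro a c hac
      refine ⟨hle hac, ?_⟩
      rw [SimpleGraph.fromEdgeSet_adj]
      rintro ⟨hmem, -⟩
      rw [Set.mem_singleton_iff, Sym2.eq_iff] at hmem
      rcases hmem with ⟨h1, h2⟩ | ⟨h1, h2⟩
      · exact hnot (h1 ▸ h2 ▸ hac)
      · exact hnot (h1 ▸ h2 ▸ hac.symm)
    exact ((SimpleGraph.isBridge_iff).mp hbridge)
      ((hHconn.preconnected i.succ j.succ).mono hle')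
  have hLH : (reducedLaplacian N H b).PosDef :=
    BridgeAux.reducedLaplacian_posDef N H b (fun u v h => hb_pos u v (hle h)) hHconn
  set Lf := reducedLaplacian N Ghat b with hLfdef
  set LH := reducedLaplacian N H b with hLHdef
  have entry : ∀ (M : Matrix (Fin N) (Fin N) ℝ) (p q : Fin N),
      Pi.single p (1:ℝ) ⬝ᵥ (M *ᵥ Pi.single q 1) = M p q := by
    intro M p q
    simp [Matrix.mulVec_single, single_dotProduct]
  have dii := BridgeAux.inv_quad_mono LH Lf hLH hLf
    (BridgeAux.sub_posSemidef N Ghat H b hb_pos hle) (Pi.single i 1)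
  rw [entry, entry] at dii
  have djj := BridgeAux.inv_quad_mono LH Lf hLH hLf
    (BridgeAux.sub_posSemidef N Ghat H b hb_pos hle) (Pi.single j 1)
  rw [entry, entry] at djj
  have hres := BridgeAux.quad_inv_le LH hLH (reducedIncidence N i.succ j.succ)
    (b i.succ j.succ) (hb_pos _ _ hGadj)
    (BridgeAux.edge_posSemidef N H b (fun u v h => hb_pos u v (hle h)) hb_symm _ _ hHadj)
  have hainc : reducedIncidence N i.succ j.succ
      = Pi.single i 1 - Pi.single j 1 := by
    funext p
    simp [reducedIncidence, Pi.single_apply, Fin.succ_inj]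
  have hexp : reducedIncidence N i.succ j.succ ⬝ᵥ
      (LH⁻¹ *ᵥ reducedIncidence N i.succ j.succ)
      = LH⁻¹ i i - LH⁻¹ i j - LH⁻¹ j i + LH⁻¹ j j := by
    rw [hainc, mulVec_sub, dotProduct_sub, sub_dotProduct, sub_dotProduct,
      entry, entry, entry, entry]
    ring
  rw [hexp] at hres
  have hsym : LH⁻¹ j i = LH⁻¹ i j := by
    have hXh := hLH.inv.1
    have := congrFun (congrFun hXh.eq i) j
    simpa using this
  linarith
end
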